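/- Let G be a finite group, p a prime with Z ≤ Z(G) a p-subgroup satisfying Z < O_p(G). Then the sets of normal p-chains of even and odd length starting at Z are in G-equivariant, stabilizer-preserving bijection; consequently for each d ≥ 0 and each p-block B of G, the sets C^d(B,Z)_+/G and C^d(B,Z)_- /G have the same cardinality. -/

import Mathlib

open scoped BigOperators Classical

namespace CTC

noncomputable def pCore (p : ℕ) (G : Type) [Group G] : Subgroup G :=
  ⨅ P : Sylow p G, (P : Subgroup G)

structure NormalPChain (p : ℕ) (G : Type) [Group G] (Z : Subgroup G) where
  n : ℕ
  D : Fin (n + 1) → Subgroup G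
  strictMono : StrictMono D
  first : D 0 = Z
  isPGroup : ∀ i, IsPGroup p (D i)
  normalInLast : ∀ i, ((D i).subgroupOf (D (Fin.last n))).Normal

def stabChain {p : ℕ} {G : Type} [Group G] {Z : Subgroup G}
    (δ : NormalPChain p G Z) : Subgroup G :=
  ⨅ i, Subgroup.normalizer (δ.D i : Set G)

def mapChain {p : ℕ} {G : Type} [Group G] {Z : Subgroup G}
    (σ : MulAut G) (hσ : Z.map σ.toMonoidHom = Z)
    (δ : NormalPChain p G Z) : NormalPChain p G Z where
  n := δ.n
  D := fun i => (δ.D i).map σ.toMonoidHom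
  strictMono := by
    intro i j hij
    have h1 : (δ.D i).map σ.toMonoidHom ≤ (δ.D j).map σ.toMonoidHom :=
      Subgroup.map_mono (δ.strictMono hij).le
    have h2 : (δ.D i).map σ.toMonoidHom ≠ (δ.D j).map σ.toMonoidHom := by
      intro h
      exact (δ.strictMono hij).ne (Subgroup.map_injective σ.injective h)
    exact lt_of_le_of_ne h1 h2
  first := by show (δ.D 0).map σ.toMonoidHom = Z; rw [δ.first, hσ]
  isPGroup := fun i => (δ.isPGroup i).map _
  normalInLast := by
    intro i
    have h := δ.normalInLast i
    constructor
    rintro a ha b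
    rw [Subgroup.mem_subgroupOf] at ha ⊢
    obtain ⟨v, hv, hva⟩ := ha
    obtain ⟨u, hu, hub⟩ := b.2
    have hvlast : v ∈ δ.D (Fin.last δ.n) := δ.strictMono.monotone (Fin.le_last i) hv
    have hconj := h.conj_mem ⟨v, hvlast⟩ (by rwa [Subgroup.mem_subgroupOf]) ⟨u, hu⟩
    rw [Subgroup.mem_subgroupOf] at hconj
    refine ⟨u * v * u⁻¹, hconj, ?_⟩
    push_cast
    rw [map_mul, map_mul, map_inv, hva, hub]

theorem map_conjAut_eq {G : Type} [Group G] {Z : Subgroup G}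
    (hZ : Z ≤ Subgroup.center G) (g : G) :
    Z.map (MulAut.conj g).toMonoidHom = Z := by
  ext x
  simp only [Subgroup.mem_map]
  constructor
  · rintro ⟨z, hz, rfl⟩
    have hc := (Subgroup.mem_center_iff.mp (hZ hz)) g
    have : (MulAut.conj g).toMonoidHom z = z := by
      simp only [MulEquiv.coe_toMonoidHom, MulAut.conj_apply]
      rw [hc]; group
    rwa [this]
  · intro hx
    refine ⟨x, hx, ?_⟩
    have hc := (Subgroup.mem_center_iff.mp (hZ hx)) g
    simp only [MulEquiv.coe_toMonoidHom, MulAut.conj_apply]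
    rw [hc]; group

/-- Conjugation action of `G` on normal `p`-chains starting at a central `Z`. -/
noncomputable def conjChain {p : ℕ} {G : Type} [Group G] {Z : Subgroup G}
    (hZ : Z ≤ Subgroup.center G) (g : G) (δ : NormalPChain p G Z) :
    NormalPChain p G Z :=
  mapChain (MulAut.conj g) (map_conjAut_eq hZ g) δ

/-- The `G`-orbit relation on pairs `(δ, ϑ)` (with `ϑ` taken from an abstract
`G`-set `X`), restricted to a subset. -/
def pairRel (p : ℕ) {G X : Type} [Group G] [MulAction G X] {Z : Subgroup G}
    (hZ : Z ≤ Subgroup.center G) (P : NormalPChain p G Z × X → Prop) :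
    {a : NormalPChain p G Z × X // P a} → {a : NormalPChain p G Z × X // P a} → Prop :=
  fun a b => ∃ g : G, conjChain hZ g a.1.1 = b.1.1 ∧ g • a.1.2 = b.1.2

/-! ### Auxiliary development for the chain pairing -/

open Pointwise

section Core

variable {G : Type} [Group G]

theorem normal_of_central {Z : Subgroup G} (hZ : Z ≤ Subgroup.center G) : Z.Normal :=
  ⟨fun z hz g => by
    have hc := Subgroup.mem_center_iff.mp (hZ hz) g
    have h : g * z * g⁻¹ = z := by rw [hc]; group
    rwa [h]⟩

theorem mem_map_conj {H : Subgroup G} {g y : G} :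
    y ∈ H.map (MulAut.conj g).toMonoidHom ↔ g⁻¹ * y * g ∈ H := by
  rw [Subgroup.mem_map_equiv, MulAut.conj_symm_apply]

theorem map_conj_apply_mem {H : Subgroup G} {g x : G} (hx : x ∈ H) :
    g * x * g⁻¹ ∈ H.map (MulAut.conj g).toMonoidHom := by
  rw [mem_map_conj]
  have h : g⁻¹ * (g * x * g⁻¹) * g = x := by group
  rwa [h]

theorem map_conj_eq_iff_mem_normalizer {H : Subgroup G} {g : G} :
    H.map (MulAut.conj g).toMonoidHom = H ↔ g ∈ Subgroup.normalizer (H : Set G) := by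
  constructor
  · intro h
    rw [Subgroup.mem_normalizer_iff]
    intro x
    constructor
    · intro hx
      rw [← h]
      exact map_conj_apply_mem hx
    · intro hx
      rw [← h, mem_map_conj] at hx
      have hh : g⁻¹ * (g * x * g⁻¹) * g = x := by group
      rwa [hh] at hx
  · intro h
    apply le_antisymm
    · rintro y hy
      rw [mem_map_conj] at hy
      have h2 := (Subgroup.mem_normalizer_iff.mp h (g⁻¹ * y * g)).mp hy
      have hy' : g * (g⁻¹ * y * g) * g⁻¹ = y := by group
      rwa [hy'] at h2
    · intro x hx
      rw [mem_map_conj]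
      exact (Subgroup.mem_normalizer_iff''.mp h x).mp hx

theorem map_conj_sup {H K : Subgroup G} (g : G) :
    (H ⊔ K).map (MulAut.conj g).toMonoidHom
      = H.map (MulAut.conj g).toMonoidHom ⊔ K.map (MulAut.conj g).toMonoidHom := by
  exact Subgroup.map_sup H K _

theorem map_conj_eq_of_mem {H : Subgroup G} {g : G} (hg : g ∈ H) :
    H.map (MulAut.conj g).toMonoidHom = H :=
  map_conj_eq_iff_mem_normalizer.mpr (Subgroup.le_normalizer hg)

/-- membership characterisation of `pCore`. -/
theorem mem_pCore {p : ℕ} {x : G} : x ∈ pCore p G ↔ ∀ P : Sylow p G, x ∈ P :=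
  Subgroup.mem_iInf

theorem pCore_map_conj (p : ℕ) (g : G) :
    (pCore p G).map (MulAut.conj g).toMonoidHom = pCore p G := by
  ext y
  rw [mem_map_conj, mem_pCore, mem_pCore]
  constructor
  · intro h P
    have h2 : g⁻¹ * y * g ∈ (↑(g⁻¹ • P) : Subgroup G) := h (g⁻¹ • P)
    rw [Sylow.coe_subgroup_smul, Subgroup.mem_pointwise_smul_iff_inv_smul_mem] at h2
    have h3 : (MulAut.conj g⁻¹)⁻¹ • (g⁻¹ * y * g) = y := by
      simp only [map_inv, inv_inv, MulAut.smul_def, MulAut.conj_apply]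
      group
    rwa [h3] at h2
  · intro h P
    have h2 : y ∈ (↑(g • P) : Subgroup G) := h (g • P)
    rw [Sylow.coe_subgroup_smul, Subgroup.mem_pointwise_smul_iff_inv_smul_mem] at h2
    have h3 : (MulAut.conj g)⁻¹ • y = g⁻¹ * y * g := by
      simp only [← map_inv, MulAut.smul_def, MulAut.conj_apply]
      group
    rwa [h3] at h2

theorem pCore_normal (p : ℕ) : (pCore p G).Normal :=
  ⟨fun x hx g => by
    have h := pCore_map_conj (G := G) p g
    rw [← h]
    exact map_conj_apply_mem hx⟩

theorem pCore_isPGroup (p : ℕ) [Fact p.Prime] : IsPGroup p (pCore p G) := by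
  obtain ⟨P⟩ := (inferInstance : Nonempty (Sylow p G))
  exact P.isPGroup'.to_le (iInf_le _ P)

end Core
section XG

variable {G : Type} [Group G]

/-- The subgroup of elements of `R` that centralize `Q` modulo the central subgroup `Z`. -/
def XG (Z R Q : Subgroup G) (hZ : Z ≤ Subgroup.center G) (hRQ : R ≤ Q) : Subgroup G where
  carrier := {x | x ∈ R ∧ ∀ h ∈ Q, x * h * x⁻¹ * h⁻¹ ∈ Z}
  one_mem' := ⟨R.one_mem, fun h _ => by
    have e : (1 : G) * h * (1 : G)⁻¹ * h⁻¹ = 1 := by group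
    rw [e]; exact Z.one_mem⟩
  mul_mem' := by
    rintro x y ⟨hxR, hx⟩ ⟨hyR, hy⟩
    refine ⟨R.mul_mem hxR hyR, fun h hh => ?_⟩
    have hc := hy h hh
    have hx2 := hx h hh
    have hcent := Subgroup.mem_center_iff.mp (hZ hc) x
    have e : x * y * h * (x * y)⁻¹ * h⁻¹
        = (y * h * y⁻¹ * h⁻¹) * (x * h * x⁻¹ * h⁻¹) := by
      calc x * y * h * (x * y)⁻¹ * h⁻¹
          = x * (y * h * y⁻¹ * h⁻¹) * (h * x⁻¹ * h⁻¹) := by group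
        _ = (y * h * y⁻¹ * h⁻¹) * x * (h * x⁻¹ * h⁻¹) := by rw [hcent]
        _ = (y * h * y⁻¹ * h⁻¹) * (x * h * x⁻¹ * h⁻¹) := by group
    rw [e]; exact Z.mul_mem hc hx2
  inv_mem' := by
    rintro x ⟨hxR, hx⟩
    refine ⟨R.inv_mem hxR, fun h hh => ?_⟩
    have hc := hx (x⁻¹ * h * x)
      (Q.mul_mem (Q.mul_mem (Q.inv_mem (hRQ hxR)) hh) (hRQ hxR))
    have e : x⁻¹ * h * x⁻¹⁻¹ * h⁻¹ = (x * (x⁻¹ * h * x) * x⁻¹ * (x⁻¹ * h * x)⁻¹)⁻¹ := by group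
    rw [e]; exact Z.inv_mem hc

theorem mem_XG {Z R Q : Subgroup G} {hZ : Z ≤ Subgroup.center G} {hRQ : R ≤ Q} {x : G} :
    x ∈ XG Z R Q hZ hRQ ↔ x ∈ R ∧ ∀ h ∈ Q, x * h * x⁻¹ * h⁻¹ ∈ Z :=
  Iff.rfl

theorem XG_le {Z R Q : Subgroup G} {hZ : Z ≤ Subgroup.center G} {hRQ : R ≤ Q} :
    XG Z R Q hZ hRQ ≤ R := fun _ hx => hx.1

theorem Z_le_XG {Z R Q : Subgroup G} {hZ : Z ≤ Subgroup.center G} {hRQ : R ≤ Q}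
    (hZR : Z ≤ R) : Z ≤ XG Z R Q hZ hRQ := by
  intro z hz
  refine ⟨hZR hz, fun h _ => ?_⟩
  have hc := Subgroup.mem_center_iff.mp (hZ hz) h
  have e : z * h * z⁻¹ * h⁻¹ = 1 := by rw [← hc]; group
  rw [e]; exact Z.one_mem

/-- Conjugation moves `XG` naturally. -/
theorem XG_map_conj {Z R Q : Subgroup G} (hZ : Z ≤ Subgroup.center G) (hRQ : R ≤ Q) (g : G) :
    (XG Z R Q hZ hRQ).map (MulAut.conj g).toMonoidHom
      = XG Z (R.map (MulAut.conj g).toMonoidHom) (Q.map (MulAut.conj g).toMonoidHom) hZ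
          (Subgroup.map_mono hRQ) := by
  ext y
  rw [mem_map_conj, mem_XG, mem_XG, mem_map_conj]
  constructor
  · rintro ⟨hyR, hy⟩
    refine ⟨hyR, fun h hh => ?_⟩
    rw [mem_map_conj] at hh
    have hc := hy (g⁻¹ * h * g) hh
    have e : y * h * y⁻¹ * h⁻¹
        = g * ((g⁻¹ * y * g) * (g⁻¹ * h * g) * (g⁻¹ * y * g)⁻¹ * (g⁻¹ * h * g)⁻¹) * g⁻¹ := by
      group
    rw [e]
    exact (normal_of_central hZ).conj_mem _ hc g
  · rintro ⟨hyR, hy⟩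
    refine ⟨hyR, fun h hh => ?_⟩
    have hh' : g * h * g⁻¹ ∈ Q.map (MulAut.conj g).toMonoidHom := map_conj_apply_mem hh
    have hc := hy (g * h * g⁻¹) hh'
    have e : (g⁻¹ * y * g) * h * (g⁻¹ * y * g)⁻¹ * h⁻¹
        = g⁻¹ * (y * (g * h * g⁻¹) * y⁻¹ * (g * h * g⁻¹)⁻¹) * g := by group
    rw [e]
    have := (normal_of_central hZ).conj_mem _ hc g⁻¹
    rwa [inv_inv] at this

/-- The key existence lemma: modulo a proper central subgroup `Z` of the normal
`p`-subgroup `R`, a finite `p`-group `Q ⊇ R` has a nontrivial `R`-element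
centralizing it. -/
theorem exists_XG_not_mem {p : ℕ} (hp : p.Prime) [Fintype G]
    {Z R Q : Subgroup G} (hZ : Z ≤ Subgroup.center G) (hRQ : R ≤ Q)
    (hZR : Z < R) (hRn : R.Normal) (hQp : IsPGroup p Q) :
    ∃ x, x ∈ XG Z R Q hZ hRQ ∧ x ∉ Z := by
  haveI hfact : Fact p.Prime := ⟨hp⟩
  haveI hZn : Z.Normal := normal_of_central hZ
  set π := QuotientGroup.mk' Z with hπ
  set Rb := R.map π with hRb
  set Qb := Q.map π with hQb
  have hRbn : Rb.Normal := hRn.map π (QuotientGroup.mk'_surjective Z)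
  letI : MulAction ↥Qb ↥Rb :=
    { smul := fun q r => ⟨(q : G ⧸ Z) * r * (q : G ⧸ Z)⁻¹, hRbn.conj_mem r.1 r.2 q⟩
      one_smul := fun r => Subtype.ext (by
        show ((1 : ↥Qb) : G ⧸ Z) * r * ((1 : ↥Qb) : G ⧸ Z)⁻¹ = r
        simp)
      mul_smul := fun a b r => Subtype.ext (by
        show ((a : G ⧸ Z) * b) * r * ((a : G ⧸ Z) * b)⁻¹
            = (a : G ⧸ Z) * ((b : G ⧸ Z) * r * (b : G ⧸ Z)⁻¹) * (a : G ⧸ Z)⁻¹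
        group) }
  have hsmul_def : ∀ (q : ↥Qb) (r : ↥Rb),
      ((q • r : ↥Rb) : G ⧸ Z) = (q : G ⧸ Z) * r * (q : G ⧸ Z)⁻¹ := fun q r => rfl
  have hQbp : IsPGroup p ↥Qb := hQp.map π
  have hRbp : IsPGroup p ↥Rb := (hQp.to_le hRQ).map π
  obtain ⟨r0, hr0R, hr0Z⟩ := SetLike.exists_of_lt hZR
  have hr0 : π r0 ≠ 1 := by
    intro h
    exact hr0Z (by rwa [← QuotientGroup.ker_mk' Z, MonoidHom.mem_ker])
  have hdvd : p ∣ Nat.card ↥Rb := by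
    set x : ↥Rb := ⟨π r0, Subgroup.mem_map_of_mem π hr0R⟩ with hx
    have hx1 : x ≠ 1 := by
      intro h
      exact hr0 (Subtype.ext_iff.mp h)
    obtain ⟨k, hk⟩ := hRbp x
    obtain ⟨m, _, hxm⟩ := (Nat.dvd_prime_pow hp).mp (orderOf_dvd_of_pow_eq_one hk)
    have hm0 : m ≠ 0 := by
      rintro rfl
      rw [pow_zero] at hxm
      exact hx1 (orderOf_eq_one_iff.mp hxm)
    have hdvd2 : p ∣ orderOf x := hxm ▸ dvd_pow_self p hm0
    exact hdvd2.trans (orderOf_dvd_natCard x)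
  have h1fix : (1 : ↥Rb) ∈ MulAction.fixedPoints ↥Qb ↥Rb := by
    rw [MulAction.mem_fixedPoints]
    intro q
    apply Subtype.ext
    rw [hsmul_def]
    simp
  haveI : Finite (G ⧸ Z) := Quotient.finite _
  obtain ⟨b, hbfix, hb1⟩ :=
    hQbp.exists_fixed_point_of_prime_dvd_card_of_fixed_point ↥Rb hdvd h1fix
  obtain ⟨x, hxR, hxval⟩ := Subgroup.mem_map.mp b.2
  have hxZ : x ∉ Z := by
    intro hxZ
    apply hb1
    apply Subtype.ext
    have h1 : π x = 1 := by rwa [← MonoidHom.mem_ker, QuotientGroup.ker_mk' Z]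
    show ((1 : ↥Rb) : G ⧸ Z) = ↑b
    simp only [OneMemClass.coe_one]
    rw [← hxval, h1]
  refine ⟨x, ⟨hxR, ?_⟩, hxZ⟩
  intro h hh
  have hq : π h⁻¹ ∈ Qb := Subgroup.mem_map_of_mem π (Q.inv_mem hh)
  have hv : (π h⁻¹ : G ⧸ Z) * ↑b * (π h⁻¹ : G ⧸ Z)⁻¹ = (b : G ⧸ Z) := by
    have := hbfix ⟨π h⁻¹, hq⟩
    exact Subtype.ext_iff.mp this
  rw [← hxval] at hv
  have hker : h⁻¹ * x * h * x⁻¹ ∈ Z := by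
    rw [← QuotientGroup.ker_mk' Z, MonoidHom.mem_ker]
    have e1 : π (h⁻¹ * x * h * x⁻¹) = (π h⁻¹ * π x * (π h⁻¹)⁻¹) * (π x)⁻¹ := by
      rw [map_mul, map_mul, map_mul, map_inv, map_inv]
      group
    rw [e1, hv]
    simp
  have e : x * h * x⁻¹ * h⁻¹ = h * (h⁻¹ * x * h * x⁻¹) * h⁻¹ := by group
  rw [e]
  exact hZn.conj_mem _ hker h

end XG
section Chains

variable {p : ℕ} {G : Type} [Group G] {Z : Subgroup G}

/-- The top (largest) term of a normal `p`-chain. -/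
def topC (δ : NormalPChain p G Z) : Subgroup G := δ.D (Fin.last δ.n)

theorem D_le_top (δ : NormalPChain p G Z) (i : Fin (δ.n + 1)) : δ.D i ≤ topC δ :=
  δ.strictMono.monotone (Fin.le_last i)

theorem Z_le_D (δ : NormalPChain p G Z) (i : Fin (δ.n + 1)) : Z ≤ δ.D i := by
  have h := δ.strictMono.monotone (Fin.zero_le i)
  rwa [δ.first] at h

theorem top_mem_range (δ : NormalPChain p G Z) : topC δ ∈ Set.range δ.D :=
  Set.mem_range_self _

theorem top_le_normalizer (δ : NormalPChain p G Z) (i : Fin (δ.n + 1)) :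
    topC δ ≤ Subgroup.normalizer (δ.D i : Set G) := by
  intro t ht
  rw [Subgroup.mem_normalizer_iff]
  intro x
  constructor
  · intro hx
    have h1 := (δ.normalInLast i).conj_mem ⟨x, D_le_top δ i hx⟩
      (by rwa [Subgroup.mem_subgroupOf]) ⟨t, ht⟩
    rw [Subgroup.mem_subgroupOf] at h1
    exact h1
  · intro hx
    have h1 := (δ.normalInLast i).conj_mem ⟨t * x * t⁻¹, D_le_top δ i hx⟩
      (by rwa [Subgroup.mem_subgroupOf]) ⟨t⁻¹, (topC δ).inv_mem ht⟩
    rw [Subgroup.mem_subgroupOf] at h1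
    have h2 : t⁻¹ * (t * x * t⁻¹) * t⁻¹⁻¹ ∈ δ.D i := h1
    have e : t⁻¹ * (t * x * t⁻¹) * t⁻¹⁻¹ = x := by group
    rwa [e] at h2

theorem card_strictMono [Fintype G] {A B : Subgroup G} (h : A < B) :
    Nat.card ↥A < Nat.card ↥B := by
  have h1 : (A : Set G) ⊂ (B : Set G) := SetLike.coe_ssubset_coe.mpr h
  have h2 := Set.ncard_lt_ncard h1 (B : Set G).toFinite
  have e1 : Nat.card ↥A = (A : Set G).ncard := Nat.card_coe_set_eq _
  have e2 : Nat.card ↥B = (B : Set G).ncard := Nat.card_coe_set_eq _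
  rw [e1, e2]
  exact h2

/-- A normal `p`-chain is determined by the set of its terms. -/
theorem eq_of_range_eq [Fintype G] {δ₁ δ₂ : NormalPChain p G Z}
    (h : Set.range δ₁.D = Set.range δ₂.D) : δ₁ = δ₂ := by
  obtain ⟨n₁, D₁, hsm₁, hf₁, hp₁, hn₁⟩ := δ₁
  obtain ⟨n₂, D₂, hsm₂, hf₂, hp₂, hn₂⟩ := δ₂
  simp only at h ⊢
  have hcard : n₁ = n₂ := by
    have h1 : Nat.card (Set.range D₁) = n₁ + 1 := by
      rw [Nat.card_range_of_injective hsm₁.injective, Nat.card_eq_fintype_card,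
        Fintype.card_fin]
    have h2 : Nat.card (Set.range D₂) = n₂ + 1 := by
      rw [Nat.card_range_of_injective hsm₂.injective, Nat.card_eq_fintype_card,
        Fintype.card_fin]
    rw [h, h2] at h1
    omega
  subst hcard
  have hD : D₁ = D₂ := by
    have hsf : StrictMono (fun i => Nat.card ↥(D₁ i)) := fun i j hij =>
      card_strictMono (hsm₁ hij)
    have hsg : StrictMono (fun i => Nat.card ↥(D₂ i)) := fun i j hij =>
      card_strictMono (hsm₂ hij)
    set s : Finset ℕ := Finset.image (fun i => Nat.card ↥(D₁ i)) Finset.univ with hs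
    have hsc : s.card = n₁ + 1 := by
      rw [hs, Finset.card_image_of_injective _ hsf.injective, Finset.card_univ,
        Fintype.card_fin]
    have hmem1 : ∀ i, Nat.card ↥(D₁ i) ∈ s := fun i =>
      Finset.mem_image_of_mem _ (Finset.mem_univ i)
    have hmem2 : ∀ i, Nat.card ↥(D₂ i) ∈ s := by
      intro i
      have hm : D₂ i ∈ Set.range D₁ := h ▸ Set.mem_range_self i
      obtain ⟨j, hj⟩ := hm
      rw [← hj]
      exact hmem1 j
    have hfg : (fun i => Nat.card ↥(D₁ i)) = fun i => Nat.card ↥(D₂ i) := by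
      rw [Finset.orderEmbOfFin_unique hsc hmem1 hsf,
        Finset.orderEmbOfFin_unique hsc hmem2 hsg]
    funext i
    have hm : D₂ i ∈ Set.range D₁ := h ▸ Set.mem_range_self i
    obtain ⟨j, hj⟩ := hm
    have hcc : Nat.card ↥(D₁ j) = Nat.card ↥(D₁ i) := by
      rw [hj]
      exact (congrFun hfg i).symm
    have hji : j = i := hsf.injective hcc
    rw [← hj, hji]
  subst hD
  rfl

end Chains
theorem XG_congr {G : Type} [Group G] {Z R₁ Q₁ R₂ Q₂ : Subgroup G}
    {hZ : Z ≤ Subgroup.center G} {h₁ : R₁ ≤ Q₁} {h₂ : R₂ ≤ Q₂}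
    (hR : R₁ = R₂) (hQ : Q₁ = Q₂) : XG Z R₁ Q₁ hZ h₁ = XG Z R₂ Q₂ hZ h₂ := by
  subst hR; subst hQ; rfl

section Construction

set_option linter.unusedSectionVars false

variable {p : ℕ} {G : Type} [Group G] [Fintype G] {Z : Subgroup G}

/-- The pivot subgroup `X(δ)`: elements of `O_p(G)` centralizing `O_p(G) ⊔ topC δ`
modulo `Z`. -/
noncomputable def Xd (hZ : Z ≤ Subgroup.center G) (δ : NormalPChain p G Z) : Subgroup G :=
  XG Z (pCore p G) (pCore p G ⊔ topC δ) hZ le_sup_left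

theorem Xd_le_R (hZ : Z ≤ Subgroup.center G) (δ : NormalPChain p G Z) :
    Xd hZ δ ≤ pCore p G := XG_le

theorem Z_le_Xd (hZ : Z ≤ Subgroup.center G) (hlt : Z < pCore p G)
    (δ : NormalPChain p G Z) : Z ≤ Xd hZ δ := Z_le_XG (le_of_lt hlt)

theorem mem_R_sup_top (δ : NormalPChain p G Z) {i : Fin (δ.n + 1)} {h : G}
    (hh : h ∈ δ.D i) : h ∈ pCore p G ⊔ topC δ :=
  (le_sup_right : topC δ ≤ pCore p G ⊔ topC δ) (D_le_top δ i hh)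

theorem R_sup_top_pgroup (hp : p.Prime) (δ : NormalPChain p G Z) :
    IsPGroup p ↥(pCore p G ⊔ topC δ) := by
  haveI : Fact p.Prime := ⟨hp⟩
  haveI := pCore_normal (G := G) p
  exact IsPGroup.to_sup_of_normal_left (pCore_isPGroup p) (δ.isPGroup (Fin.last δ.n))

theorem Xd_not_le_Z (hp : p.Prime) (hZ : Z ≤ Subgroup.center G) (hlt : Z < pCore p G)
    (δ : NormalPChain p G Z) : ¬ Xd hZ δ ≤ Z := by
  obtain ⟨x, hx, hxZ⟩ := exists_XG_not_mem hp hZ le_sup_left hlt (pCore_normal p)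
    (R_sup_top_pgroup hp δ)
  exact fun hle => hxZ (hle hx)

theorem Xd_conj_mem (hZ : Z ≤ Subgroup.center G) (δ : NormalPChain p G Z)
    (i : Fin (δ.n + 1)) {x h : G}
    (hx : x ∈ Xd hZ δ) (hh : h ∈ δ.D i) : x * h * x⁻¹ ∈ δ.D i := by
  have hc := hx.2 h (mem_R_sup_top δ hh)
  have e : x * h * x⁻¹ = (x * h * x⁻¹ * h⁻¹) * h := by group
  rw [e]
  exact (δ.D i).mul_mem (Z_le_D δ i hc) hh

theorem Xd_le_normalizer_D (hZ : Z ≤ Subgroup.center G) (δ : NormalPChain p G Z)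
    (i : Fin (δ.n + 1)) : Xd hZ δ ≤ Subgroup.normalizer (δ.D i : Set G) := by
  intro x hx
  rw [Subgroup.mem_normalizer_iff]
  intro h
  constructor
  · exact fun hh => Xd_conj_mem hZ δ i hx hh
  · intro hh
    have h1 := Xd_conj_mem hZ δ i ((Xd hZ δ).inv_mem hx) hh
    have e : x⁻¹ * (x * h * x⁻¹) * x⁻¹⁻¹ = h := by group
    rwa [e] at h1

theorem top_map_conj_Xd (hZ : Z ≤ Subgroup.center G) (δ : NormalPChain p G Z) {t : G}
    (ht : t ∈ pCore p G ⊔ topC δ) :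
    (Xd hZ δ).map (MulAut.conj t).toMonoidHom = Xd hZ δ := by
  rw [Xd, XG_map_conj]
  exact XG_congr (pCore_map_conj p t) (map_conj_eq_of_mem ht)

theorem top_le_normalizer_Xd (hZ : Z ≤ Subgroup.center G) (δ : NormalPChain p G Z) :
    topC δ ≤ Subgroup.normalizer (Xd hZ δ : Set G) := fun t ht =>
  map_conj_eq_iff_mem_normalizer.mp
    (top_map_conj_Xd hZ δ ((le_sup_right : topC δ ≤ pCore p G ⊔ topC δ) ht))

/-- index of the first chain term containing `X(δ)` (or `n+1` if none). -/
noncomputable def kd (hZ : Z ≤ Subgroup.center G) (δ : NormalPChain p G Z) : ℕ :=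
  if h : (Finset.univ.filter (fun i => Xd hZ δ ≤ δ.D i)).Nonempty then
    (((Finset.univ.filter (fun i => Xd hZ δ ≤ δ.D i)).min' h : Fin (δ.n + 1)) : ℕ)
  else δ.n + 1

theorem lt_kd_iff (hZ : Z ≤ Subgroup.center G) (δ : NormalPChain p G Z)
    (i : Fin (δ.n + 1)) :
    (i : ℕ) < kd hZ δ ↔ ¬ Xd hZ δ ≤ δ.D i := by
  rw [kd]
  split_ifs with h
  · set m := (Finset.univ.filter (fun i => Xd hZ δ ≤ δ.D i)).min' h with hm
    constructor
    · intro hi hle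
      have hmem : i ∈ Finset.univ.filter (fun i => Xd hZ δ ≤ δ.D i) := by
        rw [Finset.mem_filter]; exact ⟨Finset.mem_univ i, hle⟩
      have h2 := Finset.min'_le _ i hmem
      rw [← hm] at h2
      exact absurd (lt_of_le_of_lt h2 hi) (lt_irrefl _)
    · intro hnle
      by_contra hge
      push_neg at hge
      have hmle : m ≤ i := by
        rw [Fin.le_def]; exact hge
      have hmmem := Finset.min'_mem _ h
      rw [← hm, Finset.mem_filter] at hmmem
      exact hnle (hmmem.2.trans (δ.strictMono.monotone hmle))
  · constructor
    · intro _ hle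
      exact h ⟨i, by rw [Finset.mem_filter]; exact ⟨Finset.mem_univ i, hle⟩⟩
    · intro _
      exact i.isLt

theorem kd_le (hZ : Z ≤ Subgroup.center G) (δ : NormalPChain p G Z) :
    kd hZ δ ≤ δ.n + 1 := by
  rw [kd]
  split_ifs with h
  · exact le_of_lt (Fin.is_lt _)
  · exact le_rfl

theorem kd_pos (hp : p.Prime) (hZ : Z ≤ Subgroup.center G) (hlt : Z < pCore p G)
    (δ : NormalPChain p G Z) : 1 ≤ kd hZ δ := by
  have h0 : ((0 : Fin (δ.n + 1)) : ℕ) < kd hZ δ := by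
    rw [lt_kd_iff]
    intro hle
    rw [δ.first] at hle
    exact Xd_not_le_Z hp hZ hlt δ hle
  have h00 : ((0 : Fin (δ.n + 1)) : ℕ) = 0 := by simp
  omega

/-- The largest chain term not containing `X(δ)`. -/
noncomputable def Bd (hZ : Z ≤ Subgroup.center G) (δ : NormalPChain p G Z) : Subgroup G :=
  δ.D ⟨kd hZ δ - 1, by have := kd_le hZ δ; omega⟩

/-- The toggled subgroup `Y(δ) = B(δ) ⊔ X(δ)`. -/
noncomputable def Yd (hZ : Z ≤ Subgroup.center G) (δ : NormalPChain p G Z) : Subgroup G :=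
  Bd hZ δ ⊔ Xd hZ δ

theorem Xd_not_le_Bd (hp : p.Prime) (hZ : Z ≤ Subgroup.center G) (hlt : Z < pCore p G)
    (δ : NormalPChain p G Z) : ¬ Xd hZ δ ≤ Bd hZ δ := by
  have hk := kd_pos hp hZ hlt δ
  exact (lt_kd_iff hZ δ ⟨kd hZ δ - 1, by have := kd_le hZ δ; omega⟩).mp
    (by show kd hZ δ - 1 < kd hZ δ; omega)

theorem Bd_max (hZ : Z ≤ Subgroup.center G) (δ : NormalPChain p G Z) (i : Fin (δ.n + 1))
    (hi : ¬ Xd hZ δ ≤ δ.D i) : δ.D i ≤ Bd hZ δ := by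
  have hik : (i : ℕ) < kd hZ δ := (lt_kd_iff hZ δ i).mpr hi
  exact δ.strictMono.monotone (by rw [Fin.le_def]; show (i : ℕ) ≤ kd hZ δ - 1; omega)

theorem Xd_le_D_of_ge (hZ : Z ≤ Subgroup.center G) (δ : NormalPChain p G Z)
    (i : Fin (δ.n + 1)) (hi : kd hZ δ ≤ (i : ℕ)) : Xd hZ δ ≤ δ.D i := by
  by_contra hn
  have := (lt_kd_iff hZ δ i).mpr hn
  omega

theorem Bd_mem_range (hZ : Z ≤ Subgroup.center G) (δ : NormalPChain p G Z) :
    Bd hZ δ ∈ Set.range δ.D :=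
  Set.mem_range_self _

theorem Yd_le_R_sup_top (hZ : Z ≤ Subgroup.center G) (δ : NormalPChain p G Z) :
    Yd hZ δ ≤ pCore p G ⊔ topC δ :=
  sup_le ((D_le_top δ _).trans le_sup_right) ((Xd_le_R hZ δ).trans le_sup_left)

theorem Yd_pgroup (hp : p.Prime) (hZ : Z ≤ Subgroup.center G) (δ : NormalPChain p G Z) :
    IsPGroup p ↥(Yd hZ δ) :=
  (R_sup_top_pgroup hp δ).to_le (Yd_le_R_sup_top hZ δ)

theorem Bd_lt_Yd (hp : p.Prime) (hZ : Z ≤ Subgroup.center G) (hlt : Z < pCore p G)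
    (δ : NormalPChain p G Z) : Bd hZ δ < Yd hZ δ :=
  lt_of_le_of_ne le_sup_left (fun h => Xd_not_le_Bd hp hZ hlt δ (h ▸ le_sup_right))

theorem Z_le_Yd (hZ : Z ≤ Subgroup.center G) (δ : NormalPChain p G Z) :
    Z ≤ Yd hZ δ := (Z_le_D δ _).trans le_sup_left

theorem Yd_le_normalizer_D (hZ : Z ≤ Subgroup.center G) (δ : NormalPChain p G Z)
    (i : Fin (δ.n + 1)) : Yd hZ δ ≤ Subgroup.normalizer (δ.D i : Set G) :=
  sup_le ((D_le_top δ _).trans (top_le_normalizer δ i)) (Xd_le_normalizer_D hZ δ i)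

theorem mem_normalizer_Yd (hZ : Z ≤ Subgroup.center G) (δ : NormalPChain p G Z) {g : G}
    (h1 : g ∈ Subgroup.normalizer (Bd hZ δ : Set G))
    (h2 : (Xd hZ δ).map (MulAut.conj g).toMonoidHom = Xd hZ δ) :
    g ∈ Subgroup.normalizer (Yd hZ δ : Set G) := by
  rw [← map_conj_eq_iff_mem_normalizer]
  rw [Yd, Subgroup.map_sup, h2, map_conj_eq_iff_mem_normalizer.mpr h1]

theorem top_le_normalizer_Yd (hZ : Z ≤ Subgroup.center G) (δ : NormalPChain p G Z) :
    topC δ ≤ Subgroup.normalizer (Yd hZ δ : Set G) := fun t ht =>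
  mem_normalizer_Yd hZ δ (top_le_normalizer δ _ ht)
    (top_map_conj_Xd hZ δ ((le_sup_right : topC δ ≤ pCore p G ⊔ topC δ) ht))

theorem stab_le_normalizer_D (δ : NormalPChain p G Z) (i : Fin (δ.n + 1)) :
    stabChain δ ≤ Subgroup.normalizer (δ.D i : Set G) := iInf_le _ i

theorem stab_map_conj_Xd (hZ : Z ≤ Subgroup.center G) (δ : NormalPChain p G Z) {g : G}
    (hg : g ∈ stabChain δ) :
    (Xd hZ δ).map (MulAut.conj g).toMonoidHom = Xd hZ δ := by
  have htop : (topC δ).map (MulAut.conj g).toMonoidHom = topC δ :=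
    map_conj_eq_iff_mem_normalizer.mpr (stab_le_normalizer_D δ (Fin.last δ.n) hg)
  rw [Xd, XG_map_conj]
  refine XG_congr (pCore_map_conj p g) ?_
  rw [Subgroup.map_sup, pCore_map_conj p g, htop]

theorem stab_le_normalizer_Yd (hZ : Z ≤ Subgroup.center G) (δ : NormalPChain p G Z) :
    stabChain δ ≤ Subgroup.normalizer (Yd hZ δ : Set G) := fun g hg =>
  mem_normalizer_Yd hZ δ (stab_le_normalizer_D δ _ hg) (stab_map_conj_Xd hZ δ hg)

end Construction
section Surgery

set_option linter.unusedSectionVars false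

variable {p : ℕ} {G : Type} [Group G] [Fintype G] {Z : Subgroup G}

theorem subgroupOf_normal_of {A T : Subgroup G} (hn : T ≤ Subgroup.normalizer (A : Set G)) :
    (A.subgroupOf T).Normal := by
  constructor
  rintro ⟨a, haT⟩ ha ⟨t, htT⟩
  rw [Subgroup.mem_subgroupOf] at ha ⊢
  exact (Subgroup.mem_normalizer_iff.mp (hn htT) a).mp ha

/-- The underlying map of the insertion of `Y(δ)`. -/
noncomputable def insD (hZ : Z ≤ Subgroup.center G) (δ : NormalPChain p G Z) :
    Fin (δ.n + 2) → Subgroup G := fun i =>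
  if h : (i : ℕ) < kd hZ δ then δ.D ⟨i, lt_of_lt_of_le h (kd_le hZ δ)⟩
  else if h2 : (i : ℕ) = kd hZ δ then Yd hZ δ
  else δ.D ⟨(i : ℕ) - 1, by have h3 := i.isLt; have h4 := kd_le hZ δ; omega⟩

theorem insD_lt (hZ : Z ≤ Subgroup.center G) (δ : NormalPChain p G Z) (i : Fin (δ.n + 2))
    (h : (i : ℕ) < kd hZ δ) :
    insD hZ δ i = δ.D ⟨i, lt_of_lt_of_le h (kd_le hZ δ)⟩ := dif_pos h

theorem insD_eq (hZ : Z ≤ Subgroup.center G) (δ : NormalPChain p G Z) (i : Fin (δ.n + 2))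
    (h : (i : ℕ) = kd hZ δ) : insD hZ δ i = Yd hZ δ := by
  rw [insD, dif_neg (by omega), dif_pos h]

theorem insD_gt (hZ : Z ≤ Subgroup.center G) (δ : NormalPChain p G Z) (i : Fin (δ.n + 2))
    (h : kd hZ δ < (i : ℕ)) :
    insD hZ δ i = δ.D ⟨(i : ℕ) - 1,
      by have h3 := i.isLt; have h4 := kd_le hZ δ; omega⟩ := by
  rw [insD, dif_neg (by omega), dif_neg (by omega)]

theorem insD_strictMono (hp : p.Prime) (hZ : Z ≤ Subgroup.center G) (hlt : Z < pCore p G)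
    (δ : NormalPChain p G Z) (hY : ∀ i, δ.D i ≠ Yd hZ δ) : StrictMono (insD hZ δ) := by
  rw [Fin.strictMono_iff_lt_succ]
  intro i
  have hiv : ((Fin.castSucc i : Fin (δ.n + 2)) : ℕ) = (i : ℕ) := rfl
  have hsv : ((i.succ : Fin (δ.n + 2)) : ℕ) = (i : ℕ) + 1 := rfl
  rcases lt_trichotomy ((i : ℕ) + 1) (kd hZ δ) with h | h | h
  · rw [insD_lt hZ δ _ (by omega), insD_lt hZ δ _ (by rw [hsv]; exact h)]
    exact δ.strictMono (by rw [Fin.mk_lt_mk]; omega)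
  · -- i+1 = k : D ⟨i⟩ < Y
    rw [insD_lt hZ δ _ (by omega), insD_eq hZ δ _ (by rw [hsv]; exact h)]
    refine lt_of_le_of_lt ?_ (Bd_lt_Yd hp hZ hlt δ)
    exact δ.strictMono.monotone (by rw [Fin.le_def]; show (i : ℕ) ≤ kd hZ δ - 1; omega)
  · rcases Nat.eq_or_lt_of_le (by omega : kd hZ δ ≤ (i : ℕ)) with h3 | h3
    · -- i = k : Y < D ⟨k⟩
      have hkn : kd hZ δ ≤ δ.n := by have := i.isLt; omega
      rw [insD_eq hZ δ _ (by rw [hiv]; omega), insD_gt hZ δ _ (by rw [hsv]; omega)]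
      have hle : Yd hZ δ ≤ δ.D ⟨(i : ℕ) + 1 - 1, by omega⟩ := by
        refine sup_le ?_ ?_
        · exact δ.strictMono.monotone
            (by rw [Fin.le_def]; show kd hZ δ - 1 ≤ (i : ℕ) + 1 - 1; omega)
        · exact Xd_le_D_of_ge hZ δ _ (by show kd hZ δ ≤ (i : ℕ) + 1 - 1; omega)
      exact lt_of_le_of_ne hle (fun hEq => hY _ hEq.symm)
    · -- i > k : both old
      rw [insD_gt hZ δ _ (by omega), insD_gt hZ δ _ (by rw [hsv]; omega)]
      exact δ.strictMono (by rw [Fin.mk_lt_mk]; omega)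

/-- Insertion of `Y(δ)` into the chain `δ`. -/
noncomputable def insertC (hp : p.Prime) (hZ : Z ≤ Subgroup.center G) (hlt : Z < pCore p G)
    (δ : NormalPChain p G Z) (hY : ∀ i, δ.D i ≠ Yd hZ δ) : NormalPChain p G Z where
  n := δ.n + 1
  D := insD hZ δ
  strictMono := insD_strictMono hp hZ hlt δ hY
  first := by
    have h0 : ((0 : Fin (δ.n + 2)) : ℕ) < kd hZ δ := by
      have h00 : ((0 : Fin (δ.n + 2)) : ℕ) = 0 := by simp
      have := kd_pos hp hZ hlt δ
      omega
    rw [insD_lt hZ δ 0 h0]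
    rw [show (⟨((0 : Fin (δ.n + 2)) : ℕ), lt_of_lt_of_le h0 (kd_le hZ δ)⟩ : Fin (δ.n + 1)) = 0
      from Fin.ext (by simp)]
    exact δ.first
  isPGroup := by
    intro i
    rcases lt_trichotomy ((i : ℕ)) (kd hZ δ) with h | h | h
    · rw [insD_lt hZ δ i h]; exact δ.isPGroup _
    · rw [insD_eq hZ δ i h]; exact Yd_pgroup hp hZ δ
    · rw [insD_gt hZ δ i h]; exact δ.isPGroup _
  normalInLast := by
    intro i
    apply subgroupOf_normal_of
    have hlast : ((Fin.last (δ.n + 1) : Fin (δ.n + 2)) : ℕ) = δ.n + 1 := rfl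
    rcases Nat.lt_or_ge (δ.n + 1) (kd hZ δ) with hk | hk
    ·
      have := kd_le hZ δ; omega
    · rcases Nat.eq_or_lt_of_le hk with hk1 | hk1
      · -- k = n + 1 : last term is Y
        rw [insD_eq hZ δ _ (by rw [hlast]; omega)]
        rcases lt_trichotomy ((i : ℕ)) (kd hZ δ) with h | h | h
        · rw [insD_lt hZ δ i h]
          exact Yd_le_normalizer_D hZ δ _
        · rw [insD_eq hZ δ i h]
          exact Subgroup.le_normalizer
        · exfalso; have := i.isLt; omega
      · -- k ≤ n : last term is top
        have hDlast : insD hZ δ (Fin.last (δ.n + 1)) = topC δ := by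
          rw [insD_gt hZ δ _ (by rw [hlast]; omega)]
          apply congrArg
          apply Fin.ext
          show ((Fin.last (δ.n + 1)) : ℕ) - 1 = δ.n
          rw [hlast]
          omega
        rw [hDlast]
        rcases lt_trichotomy ((i : ℕ)) (kd hZ δ) with h | h | h
        · rw [insD_lt hZ δ i h]; exact top_le_normalizer δ _
        · rw [insD_eq hZ δ i h]; exact top_le_normalizer_Yd hZ δ
        · rw [insD_gt hZ δ i h]; exact top_le_normalizer δ _

theorem range_insertC (hp : p.Prime) (hZ : Z ≤ Subgroup.center G) (hlt : Z < pCore p G)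
    (δ : NormalPChain p G Z) (hY : ∀ i, δ.D i ≠ Yd hZ δ) :
    Set.range (insertC hp hZ hlt δ hY).D = Set.range δ.D ∪ {Yd hZ δ} := by
  have hD : (insertC hp hZ hlt δ hY).D = insD hZ δ := rfl
  rw [hD]
  ext A
  constructor
  · rintro ⟨i, rfl⟩
    rcases lt_trichotomy ((i : ℕ)) (kd hZ δ) with h | h | h
    · rw [insD_lt hZ δ i h]; exact Or.inl (Set.mem_range_self _)
    · rw [insD_eq hZ δ i h]; exact Or.inr rfl
    · rw [insD_gt hZ δ i h]; exact Or.inl (Set.mem_range_self _)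
  · rintro (⟨j, rfl⟩ | rfl)
    · rcases Nat.lt_or_ge ((j : ℕ)) (kd hZ δ) with h | h
      · refine ⟨⟨(j : ℕ), by have := j.isLt; show (j : ℕ) < δ.n + 1 + 1; omega⟩, ?_⟩
        exact insD_lt hZ δ _ h
      · refine ⟨⟨(j : ℕ) + 1, by have := j.isLt; show (j : ℕ) + 1 < δ.n + 1 + 1; omega⟩, ?_⟩
        exact (insD_gt hZ δ ⟨(j : ℕ) + 1, by have := j.isLt; omega⟩
          (by show kd hZ δ < (j : ℕ) + 1; omega)).trans
          (congrArg δ.D (Fin.ext (by show (j : ℕ) + 1 - 1 = (j : ℕ); omega)))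
    · refine ⟨⟨kd hZ δ, by have := kd_le hZ δ; show kd hZ δ < δ.n + 1 + 1; omega⟩, ?_⟩
      exact insD_eq hZ δ _ rfl

end Surgery
section Erase

set_option linter.unusedSectionVars false

variable {p : ℕ} {G : Type} [Group G] [Fintype G] {Z : Subgroup G}

/-- The underlying map after deleting the term at position `kd`. -/
noncomputable def ersD (hZ : Z ≤ Subgroup.center G) (δ : NormalPChain p G Z)
    (h1 : 1 ≤ kd hZ δ) (hk : kd hZ δ ≤ δ.n) : Fin (δ.n - 1 + 1) → Subgroup G := fun i =>
  if h : (i : ℕ) < kd hZ δ then δ.D ⟨i, by have := i.isLt; omega⟩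
  else δ.D ⟨(i : ℕ) + 1, by have := i.isLt; omega⟩

theorem ersD_lt (hZ : Z ≤ Subgroup.center G) (δ : NormalPChain p G Z)
    (h1 : 1 ≤ kd hZ δ) (hk : kd hZ δ ≤ δ.n) (i : Fin (δ.n - 1 + 1))
    (h : (i : ℕ) < kd hZ δ) :
    ersD hZ δ h1 hk i = δ.D ⟨i, by have := i.isLt; omega⟩ := dif_pos h

theorem ersD_ge (hZ : Z ≤ Subgroup.center G) (δ : NormalPChain p G Z)
    (h1 : 1 ≤ kd hZ δ) (hk : kd hZ δ ≤ δ.n) (i : Fin (δ.n - 1 + 1))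
    (h : kd hZ δ ≤ (i : ℕ)) :
    ersD hZ δ h1 hk i = δ.D ⟨(i : ℕ) + 1, by have := i.isLt; omega⟩ := dif_neg (by omega)

theorem ersD_strictMono (hZ : Z ≤ Subgroup.center G) (δ : NormalPChain p G Z)
    (h1 : 1 ≤ kd hZ δ) (hk : kd hZ δ ≤ δ.n) : StrictMono (ersD hZ δ h1 hk) := by
  rw [Fin.strictMono_iff_lt_succ]
  intro i
  have hsv : ((i.succ : Fin (δ.n - 1 + 1)) : ℕ) = (i : ℕ) + 1 := rfl
  have hiv : ((Fin.castSucc i : Fin (δ.n - 1 + 1)) : ℕ) = (i : ℕ) := rfl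
  rcases Nat.lt_or_ge ((i : ℕ) + 1) (kd hZ δ) with h | h
  · rw [ersD_lt hZ δ h1 hk _ (by rw [hiv]; omega), ersD_lt hZ δ h1 hk _ (by rw [hsv]; exact h)]
    exact δ.strictMono (by rw [Fin.mk_lt_mk]; omega)
  · rcases Nat.lt_or_ge ((i : ℕ)) (kd hZ δ) with h2 | h2
    · rw [ersD_lt hZ δ h1 hk _ (by rw [hiv]; exact h2), ersD_ge hZ δ h1 hk _ (by rw [hsv]; exact h)]
      exact δ.strictMono (by rw [Fin.mk_lt_mk]; omega)
    · rw [ersD_ge hZ δ h1 hk _ (by rw [hiv]; exact h2), ersD_ge hZ δ h1 hk _ (by rw [hsv]; omega)]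
      exact δ.strictMono (by rw [Fin.mk_lt_mk]; omega)

theorem ersD_is_D (hZ : Z ≤ Subgroup.center G) (δ : NormalPChain p G Z)
    (h1 : 1 ≤ kd hZ δ) (hk : kd hZ δ ≤ δ.n) (i : Fin (δ.n - 1 + 1)) :
    ∃ j, ersD hZ δ h1 hk i = δ.D j := by
  rcases Nat.lt_or_ge ((i : ℕ)) (kd hZ δ) with h | h
  · exact ⟨_, ersD_lt hZ δ h1 hk i h⟩
  · exact ⟨_, ersD_ge hZ δ h1 hk i h⟩

/-- Deleting the term `Y(δ)` (at position `kd`) from the chain `δ`. -/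
noncomputable def eraseC (hp : p.Prime) (hZ : Z ≤ Subgroup.center G) (hlt : Z < pCore p G)
    (δ : NormalPChain p G Z) (hk : kd hZ δ ≤ δ.n) : NormalPChain p G Z where
  n := δ.n - 1
  D := ersD hZ δ (kd_pos hp hZ hlt δ) hk
  strictMono := ersD_strictMono hZ δ (kd_pos hp hZ hlt δ) hk
  first := by
    have h0 : ((0 : Fin (δ.n - 1 + 1)) : ℕ) < kd hZ δ := by
      have h00 : ((0 : Fin (δ.n - 1 + 1)) : ℕ) = 0 := by simp
      have := kd_pos hp hZ hlt δ
      omega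
    rw [ersD_lt hZ δ (kd_pos hp hZ hlt δ) hk 0 h0]
    rw [show (⟨((0 : Fin (δ.n - 1 + 1)) : ℕ), _⟩ : Fin (δ.n + 1)) = 0 from Fin.ext (by simp)]
    exact δ.first
  isPGroup := by
    intro i
    obtain ⟨j, hj⟩ := ersD_is_D hZ δ (kd_pos hp hZ hlt δ) hk i
    rw [hj]
    exact δ.isPGroup j
  normalInLast := by
    intro i
    apply subgroupOf_normal_of
    obtain ⟨j, hj⟩ := ersD_is_D hZ δ (kd_pos hp hZ hlt δ) hk i
    obtain ⟨j', hj'⟩ := ersD_is_D hZ δ (kd_pos hp hZ hlt δ) hk (Fin.last (δ.n - 1))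
    rw [hj, hj']
    exact (D_le_top δ j').trans (top_le_normalizer δ j)

theorem range_eraseC (hp : p.Prime) (hZ : Z ≤ Subgroup.center G) (hlt : Z < pCore p G)
    (δ : NormalPChain p G Z) (hk : kd hZ δ ≤ δ.n)
    (hDk : δ.D ⟨kd hZ δ, by omega⟩ = Yd hZ δ) :
    Set.range (eraseC hp hZ hlt δ hk).D = Set.range δ.D \ {Yd hZ δ} := by
  have hD : (eraseC hp hZ hlt δ hk).D = ersD hZ δ (kd_pos hp hZ hlt δ) hk := rfl
  rw [hD]
  ext A
  constructor
  · rintro ⟨i, rfl⟩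
    rcases Nat.lt_or_ge ((i : ℕ)) (kd hZ δ) with h | h
    · rw [ersD_lt hZ δ (kd_pos hp hZ hlt δ) hk i h]
      refine ⟨Set.mem_range_self _, ?_⟩
      intro hY
      rw [Set.mem_singleton_iff] at hY
      rw [← hDk] at hY
      have := δ.strictMono.injective hY
      have hval : (i : ℕ) = kd hZ δ := congrArg Fin.val this
      omega
    · rw [ersD_ge hZ δ (kd_pos hp hZ hlt δ) hk i h]
      refine ⟨Set.mem_range_self _, ?_⟩
      intro hY
      rw [Set.mem_singleton_iff] at hY
      rw [← hDk] at hY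
      have := δ.strictMono.injective hY
      have hval : (i : ℕ) + 1 = kd hZ δ := congrArg Fin.val this
      omega
  · rintro ⟨⟨j, rfl⟩, hA⟩
    rw [Set.mem_singleton_iff] at hA
    have hjk : (j : ℕ) ≠ kd hZ δ := by
      intro hEq
      apply hA
      rw [← hDk]
      apply congrArg
      apply Fin.ext
      exact hEq
    rcases Nat.lt_or_ge ((j : ℕ)) (kd hZ δ) with h | h
    · refine ⟨⟨(j : ℕ),
        (by have := j.isLt; have := kd_pos hp hZ hlt δ; omega : (j : ℕ) < δ.n - 1 + 1)⟩, ?_⟩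
      exact ersD_lt hZ δ (kd_pos hp hZ hlt δ) hk _ h
    · have hjk2 : kd hZ δ < (j : ℕ) := by omega
      refine ⟨⟨(j : ℕ) - 1,
        (by have := j.isLt; have := kd_pos hp hZ hlt δ; omega : (j : ℕ) - 1 < δ.n - 1 + 1)⟩, ?_⟩
      exact (ersD_ge hZ δ (kd_pos hp hZ hlt δ) hk
          ⟨(j : ℕ) - 1, by have := j.isLt; have := kd_pos hp hZ hlt δ; omega⟩
          (by show kd hZ δ ≤ (j : ℕ) - 1; omega)).trans
        (congrArg δ.D (Fin.ext (by show (j : ℕ) - 1 + 1 = (j : ℕ); omega)))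

end Erase
section Pairing

set_option linter.unusedSectionVars false

variable {p : ℕ} {G : Type} [Group G] [Fintype G] {Z : Subgroup G}

theorem R_sup_absorb {R T X' : Subgroup G} (hX : X' ≤ R) : R ⊔ (T ⊔ X') = R ⊔ T := by
  apply le_antisymm
  · exact sup_le le_sup_left (sup_le le_sup_right (hX.trans le_sup_left))
  · exact sup_le le_sup_left ((le_sup_left : T ≤ T ⊔ X').trans le_sup_right)

theorem kd_le_n_of_mem (hZ : Z ≤ Subgroup.center G) (δ : NormalPChain p G Z)
    (h : ∃ i, δ.D i = Yd hZ δ) : kd hZ δ ≤ δ.n := by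
  obtain ⟨i, hi⟩ := h
  have hX : Xd hZ δ ≤ δ.D i := hi ▸ (le_sup_right : Xd hZ δ ≤ Yd hZ δ)
  have h2 : ¬ ((i : ℕ) < kd hZ δ) := fun hlt' => (lt_kd_iff hZ δ i).mp hlt' hX
  have := i.isLt
  omega

theorem D_kd_eq_Yd (hp : p.Prime) (hZ : Z ≤ Subgroup.center G) (hlt : Z < pCore p G)
    (δ : NormalPChain p G Z) (h : ∃ i, δ.D i = Yd hZ δ) (hk : kd hZ δ ≤ δ.n) :
    δ.D ⟨kd hZ δ, by omega⟩ = Yd hZ δ := by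
  obtain ⟨i, hi⟩ := h
  have hX : Xd hZ δ ≤ δ.D i := hi ▸ (le_sup_right : Xd hZ δ ≤ Yd hZ δ)
  have h2 : ¬ ((i : ℕ) < kd hZ δ) := fun hlt' => (lt_kd_iff hZ δ i).mp hlt' hX
  apply le_antisymm
  · rw [← hi]
    exact δ.strictMono.monotone (by rw [Fin.le_def]; show kd hZ δ ≤ (i : ℕ); omega)
  · refine sup_le ?_ ?_
    · exact δ.strictMono.monotone (by rw [Fin.le_def]; show kd hZ δ - 1 ≤ kd hZ δ; omega)
    · exact Xd_le_D_of_ge hZ δ _ le_rfl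

/-- The pairing map on normal `p`-chains: toggle the subgroup `Y(δ)`. -/
noncomputable def fc (hp : p.Prime) (hZ : Z ≤ Subgroup.center G) (hlt : Z < pCore p G)
    (δ : NormalPChain p G Z) : NormalPChain p G Z :=
  if h : ∃ i, δ.D i = Yd hZ δ then
    eraseC hp hZ hlt δ (kd_le_n_of_mem hZ δ h)
  else insertC hp hZ hlt δ (fun i hi => h ⟨i, hi⟩)

variable (hp : p.Prime) (hZ : Z ≤ Subgroup.center G) (hlt : Z < pCore p G)

theorem fc_of_mem (δ : NormalPChain p G Z) (h : ∃ i, δ.D i = Yd hZ δ) :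
    fc hp hZ hlt δ = eraseC hp hZ hlt δ (kd_le_n_of_mem hZ δ h) := dif_pos h

theorem fc_of_not_mem (δ : NormalPChain p G Z) (h : ¬ ∃ i, δ.D i = Yd hZ δ) :
    fc hp hZ hlt δ = insertC hp hZ hlt δ (fun i hi => h ⟨i, hi⟩) := dif_neg h

theorem range_fc_of_mem (δ : NormalPChain p G Z) (h : ∃ i, δ.D i = Yd hZ δ) :
    Set.range (fc hp hZ hlt δ).D = Set.range δ.D \ {Yd hZ δ} := by
  rw [fc_of_mem hp hZ hlt δ h]
  exact range_eraseC hp hZ hlt δ (kd_le_n_of_mem hZ δ h)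
    (D_kd_eq_Yd hp hZ hlt δ h (kd_le_n_of_mem hZ δ h))

theorem range_fc_of_not_mem (δ : NormalPChain p G Z) (h : ¬ ∃ i, δ.D i = Yd hZ δ) :
    Set.range (fc hp hZ hlt δ).D = Set.range δ.D ∪ {Yd hZ δ} := by
  rw [fc_of_not_mem hp hZ hlt δ h]
  exact range_insertC hp hZ hlt δ _

theorem insD_last_of_le (δ : NormalPChain p G Z) (hk : kd hZ δ ≤ δ.n) :
    insD hZ δ (Fin.last (δ.n + 1)) = topC δ := by
  have hlast : ((Fin.last (δ.n + 1)) : ℕ) = δ.n + 1 := rfl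
  rw [insD_gt hZ δ _ (by rw [hlast]; omega)]
  apply congrArg
  apply Fin.ext
  show ((Fin.last (δ.n + 1)) : ℕ) - 1 = δ.n
  rw [hlast]
  omega

theorem insD_last_of_eq (δ : NormalPChain p G Z) (hk : kd hZ δ = δ.n + 1) :
    insD hZ δ (Fin.last (δ.n + 1)) = Yd hZ δ := by
  have hlast : ((Fin.last (δ.n + 1)) : ℕ) = δ.n + 1 := rfl
  rw [insD_eq hZ δ _ (by rw [hlast, hk])]

/-- `O_p(G) ⊔ top` is preserved by the pairing. -/
theorem R_sup_top_fc (δ : NormalPChain p G Z) :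
    pCore p G ⊔ topC (fc hp hZ hlt δ) = pCore p G ⊔ topC δ := by
  by_cases h : ∃ i, δ.D i = Yd hZ δ
  · rw [fc_of_mem hp hZ hlt δ h]
    set hk := kd_le_n_of_mem hZ δ h
    have hDk := D_kd_eq_Yd hp hZ hlt δ h hk
    have h1 := kd_pos hp hZ hlt δ
    have htopv : topC (eraseC hp hZ hlt δ hk)
        = ersD hZ δ (kd_pos hp hZ hlt δ) hk (Fin.last (δ.n - 1)) := rfl
    have hlast : ((Fin.last (δ.n - 1)) : ℕ) = δ.n - 1 := rfl
    rcases Nat.lt_or_ge (δ.n - 1) (kd hZ δ) with h2 | h2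
    · -- kd = δ.n ; new top = D (n-1) = Bd
      have hkn : kd hZ δ = δ.n := by omega
      have hB : topC (eraseC hp hZ hlt δ hk) = Bd hZ δ := by
        rw [htopv, ersD_lt hZ δ _ hk _ (by rw [hlast]; omega)]
        apply congrArg
        apply Fin.ext
        show δ.n - 1 = kd hZ δ - 1
        omega
      have hT : topC δ = Yd hZ δ := by
        rw [← hDk]
        show δ.D (Fin.last δ.n) = _
        apply congrArg
        apply Fin.ext
        show δ.n = kd hZ δ
        omega
      rw [hB, hT, Yd, R_sup_absorb (Xd_le_R hZ δ)]
    · -- kd ≤ δ.n - 1 ; new top = D (δ.n) = top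
      have hT : topC (eraseC hp hZ hlt δ hk) = topC δ := by
        rw [htopv, ersD_ge hZ δ _ hk _ (by rw [hlast]; omega)]
        apply congrArg
        apply Fin.ext
        show δ.n - 1 + 1 = δ.n
        omega
      rw [hT]
  · rw [fc_of_not_mem hp hZ hlt δ h]
    have htopv : topC (insertC hp hZ hlt δ (fun i hi => h ⟨i, hi⟩))
        = insD hZ δ (Fin.last (δ.n + 1)) := rfl
    rcases Nat.eq_or_lt_of_le (kd_le hZ δ) with h2 | h2
    · -- kd = n+1 : new top = Y, Bd = top
      have hB : Bd hZ δ = topC δ := by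
        rw [Bd]
        apply congrArg
        apply Fin.ext
        show kd hZ δ - 1 = δ.n
        omega
      rw [htopv, insD_last_of_eq hZ δ h2, Yd, hB, R_sup_absorb (Xd_le_R hZ δ)]
    · rw [htopv, insD_last_of_le hZ δ (by omega)]

theorem Xd_fc (δ : NormalPChain p G Z) : Xd hZ (fc hp hZ hlt δ) = Xd hZ δ :=
  XG_congr rfl (R_sup_top_fc hp hZ hlt δ)

theorem Yd_mem_range_iff (δ : NormalPChain p G Z) :
    Yd hZ δ ∈ Set.range δ.D ↔ ∃ i, δ.D i = Yd hZ δ := by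
  constructor
  · rintro ⟨i, hi⟩; exact ⟨i, hi⟩
  · rintro ⟨i, hi⟩; exact ⟨i, hi⟩

theorem Bd_fc (δ : NormalPChain p G Z) : Bd hZ (fc hp hZ hlt δ) = Bd hZ δ := by
  have hX := Xd_fc hp hZ hlt δ
  have hnB1 : ¬ Xd hZ δ ≤ Bd hZ (fc hp hZ hlt δ) := by
    rw [← hX]; exact Xd_not_le_Bd hp hZ hlt _
  have hnB2 : ¬ Xd hZ δ ≤ Bd hZ δ := Xd_not_le_Bd hp hZ hlt δ
  have hXY : Xd hZ δ ≤ Yd hZ δ := le_sup_right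
  by_cases h : ∃ i, δ.D i = Yd hZ δ
  · have hr := range_fc_of_mem hp hZ hlt δ h
    -- Bd (fc δ) ∈ range δ.D
    have hm1 : Bd hZ (fc hp hZ hlt δ) ∈ Set.range δ.D := by
      have := Bd_mem_range hZ (fc hp hZ hlt δ)
      rw [hr] at this
      exact this.1
    -- Bd δ ∈ range (fc δ).D
    have hm2 : Bd hZ δ ∈ Set.range (fc hp hZ hlt δ).D := by
      rw [hr]
      refine ⟨Bd_mem_range hZ δ, ?_⟩
      intro hBY
      rw [Set.mem_singleton_iff] at hBY
      exact hnB2 (hBY ▸ hXY)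
    obtain ⟨j1, hj1⟩ := hm1
    obtain ⟨j2, hj2⟩ := hm2
    apply le_antisymm
    · rw [← hj1]
      exact Bd_max hZ δ j1 (by rw [hj1]; exact hnB1)
    · rw [← hj2]
      exact Bd_max hZ (fc hp hZ hlt δ) j2 (by rw [hj2, hX]; exact hnB2)
  · have hr := range_fc_of_not_mem hp hZ hlt δ h
    have hm1 : Bd hZ (fc hp hZ hlt δ) ∈ Set.range δ.D := by
      have h2 := Bd_mem_range hZ (fc hp hZ hlt δ)
      rw [hr] at h2
      rcases h2 with h2 | h2
      · exact h2
      · rw [Set.mem_singleton_iff] at h2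
        exact absurd (h2 ▸ hXY) hnB1
    have hm2 : Bd hZ δ ∈ Set.range (fc hp hZ hlt δ).D := by
      rw [hr]
      exact Or.inl (Bd_mem_range hZ δ)
    obtain ⟨j1, hj1⟩ := hm1
    obtain ⟨j2, hj2⟩ := hm2
    apply le_antisymm
    · rw [← hj1]
      exact Bd_max hZ δ j1 (by rw [hj1]; exact hnB1)
    · rw [← hj2]
      exact Bd_max hZ (fc hp hZ hlt δ) j2 (by rw [hj2, hX]; exact hnB2)

theorem Yd_fc (δ : NormalPChain p G Z) : Yd hZ (fc hp hZ hlt δ) = Yd hZ δ := by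
  rw [Yd, Yd, Bd_fc hp hZ hlt δ, Xd_fc hp hZ hlt δ]

/-- the pairing is an involution. -/
theorem fc_fc (δ : NormalPChain p G Z) : fc hp hZ hlt (fc hp hZ hlt δ) = δ := by
  apply eq_of_range_eq
  have hY := Yd_fc hp hZ hlt δ
  by_cases h : ∃ i, δ.D i = Yd hZ δ
  · have h1 := range_fc_of_mem hp hZ hlt δ h
    have h2 : ¬ ∃ i, (fc hp hZ hlt δ).D i = Yd hZ (fc hp hZ hlt δ) := by
      rw [← Yd_mem_range_iff, hY, h1]
      intro hmem
      exact hmem.2 rfl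
    rw [range_fc_of_not_mem hp hZ hlt _ h2, hY, h1]
    rw [Set.diff_union_self]
    exact Set.union_eq_self_of_subset_right
      (Set.singleton_subset_iff.mpr ((Yd_mem_range_iff hZ δ).mpr h))
  · have h1 := range_fc_of_not_mem hp hZ hlt δ h
    have h2 : ∃ i, (fc hp hZ hlt δ).D i = Yd hZ (fc hp hZ hlt δ) := by
      rw [← Yd_mem_range_iff, hY, h1]
      exact Or.inr rfl
    rw [range_fc_of_mem hp hZ hlt _ h2, hY, h1]
    rw [Set.union_diff_distrib, Set.diff_self, Set.union_empty]
    apply Set.diff_singleton_eq_self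
    rw [Yd_mem_range_iff]
    exact h

/-- the pairing changes the parity of the chain length. -/
theorem fc_parity (δ : NormalPChain p G Z) :
    Even (fc hp hZ hlt δ).n ↔ ¬ Even δ.n := by
  by_cases h : ∃ i, δ.D i = Yd hZ δ
  · have hn : (fc hp hZ hlt δ).n = δ.n - 1 := by rw [fc_of_mem hp hZ hlt δ h]; rfl
    have hk := kd_le_n_of_mem hZ δ h
    have h1 := kd_pos hp hZ hlt δ
    obtain ⟨m, hm⟩ : ∃ m, δ.n = m + 1 := ⟨δ.n - 1, by omega⟩
    rw [hn, hm]
    simp [Nat.even_add_one]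
  · have hn : (fc hp hZ hlt δ).n = δ.n + 1 := by rw [fc_of_not_mem hp hZ hlt δ h]; rfl
    rw [hn]
    simp [Nat.even_add_one]

theorem stab_range_eq (δ : NormalPChain p G Z) :
    stabChain δ = ⨅ A ∈ Set.range δ.D, Subgroup.normalizer (A : Set G) := by
  rw [stabChain]
  exact (iInf_range : ⨅ A ∈ Set.range δ.D, Subgroup.normalizer (A : Set G) = _).symm

/-- the pairing preserves stabilizers. -/
theorem fc_stab (δ : NormalPChain p G Z) :
    stabChain (fc hp hZ hlt δ) = stabChain δ := by
  have hY := Yd_fc hp hZ hlt δ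
  by_cases h : ∃ i, δ.D i = Yd hZ δ
  · have h1 := range_fc_of_mem hp hZ hlt δ h
    have hsplit : Set.range δ.D = Set.range (fc hp hZ hlt δ).D ∪ {Yd hZ δ} := by
      rw [h1, Set.diff_union_self]
      exact (Set.union_eq_self_of_subset_right
        (Set.singleton_subset_iff.mpr ((Yd_mem_range_iff hZ δ).mpr h))).symm
    rw [stab_range_eq δ, hsplit, iInf_union, iInf_singleton, ← stab_range_eq]
    symm
    rw [inf_eq_left]
    have := stab_le_normalizer_Yd hZ (fc hp hZ hlt δ)
    rwa [hY] at this
  · have h1 := range_fc_of_not_mem hp hZ hlt δ h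
    rw [stab_range_eq (fc hp hZ hlt δ), h1, iInf_union, iInf_singleton, ← stab_range_eq]
    rw [inf_eq_left]
    exact stab_le_normalizer_Yd hZ δ

end Pairing
section Equivariance

set_option linter.unusedSectionVars false

variable {p : ℕ} {G : Type} [Group G] [Fintype G] {Z : Subgroup G}
variable (hp : p.Prime) (hZ : Z ≤ Subgroup.center G) (hlt : Z < pCore p G)

theorem conjChain_D_apply (g : G) (δ : NormalPChain p G Z) (i : Fin (δ.n + 1)) :
    (conjChain hZ g δ).D i = (δ.D i).map (MulAut.conj g).toMonoidHom := rfl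

theorem topC_conj (g : G) (δ : NormalPChain p G Z) :
    topC (conjChain hZ g δ) = (topC δ).map (MulAut.conj g).toMonoidHom := rfl

theorem Xd_conj (g : G) (δ : NormalPChain p G Z) :
    Xd hZ (conjChain hZ g δ) = (Xd hZ δ).map (MulAut.conj g).toMonoidHom := by
  rw [Xd, Xd, XG_map_conj hZ]
  apply XG_congr (pCore_map_conj p g).symm
  rw [Subgroup.map_sup, pCore_map_conj p g]
  rfl

theorem kd_unique (δ : NormalPChain p G Z) (k : ℕ) (hk : k ≤ δ.n + 1)
    (h : ∀ i : Fin (δ.n + 1), (i : ℕ) < k ↔ ¬ Xd hZ δ ≤ δ.D i) : kd hZ δ = k := by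
  rcases Nat.lt_trichotomy (kd hZ δ) k with hlt2 | hEq | hgt
  · exfalso
    have hi : kd hZ δ < δ.n + 1 := by omega
    have h1 := (h ⟨kd hZ δ, hi⟩).mp (by show kd hZ δ < k; omega)
    exact h1 (Xd_le_D_of_ge hZ δ _ (le_refl _))
  · exact hEq
  · exfalso
    have hi : k < δ.n + 1 := by have := kd_le hZ δ; omega
    have h1 := (lt_kd_iff hZ δ ⟨k, hi⟩).mp (by show (k : ℕ) < kd hZ δ; omega)
    apply h1
    by_contra hc
    have h2 := (h ⟨k, hi⟩).mpr hc
    simp only [] at h2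
    omega

theorem kd_conj (g : G) (δ : NormalPChain p G Z) :
    kd hZ (conjChain hZ g δ) = kd hZ δ := by
  apply kd_unique hZ (conjChain hZ g δ) (kd hZ δ) (kd_le hZ δ)
  intro i
  rw [Xd_conj hZ g δ, conjChain_D_apply hZ g δ i,
    Subgroup.map_le_map_iff_of_injective (MulAut.conj g).injective]
  exact lt_kd_iff hZ δ i

theorem Bd_conj (g : G) (δ : NormalPChain p G Z) :
    Bd hZ (conjChain hZ g δ) = (Bd hZ δ).map (MulAut.conj g).toMonoidHom := by
  rw [Bd, Bd]
  refine (conjChain_D_apply hZ g δ _).trans ?_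
  apply congrArg
  apply congrArg
  apply Fin.ext
  show kd hZ (conjChain hZ g δ) - 1 = kd hZ δ - 1
  rw [kd_conj hZ g δ]

theorem Yd_conj (g : G) (δ : NormalPChain p G Z) :
    Yd hZ (conjChain hZ g δ) = (Yd hZ δ).map (MulAut.conj g).toMonoidHom := by
  rw [Yd, Yd, Bd_conj hZ g δ, Xd_conj hZ g δ, ← Subgroup.map_sup]

theorem exists_Y_conj_iff (g : G) (δ : NormalPChain p G Z) :
    (∃ i, (conjChain hZ g δ).D i = Yd hZ (conjChain hZ g δ)) ↔
      ∃ i, δ.D i = Yd hZ δ := by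
  constructor
  · rintro ⟨i, hi⟩
    refine ⟨i, ?_⟩
    rw [conjChain_D_apply hZ g δ i, Yd_conj hZ g δ] at hi
    exact Subgroup.map_injective (MulAut.conj g).injective hi
  · rintro ⟨i, hi⟩
    refine ⟨i, ?_⟩
    rw [conjChain_D_apply hZ g δ i, Yd_conj hZ g δ, hi]

theorem range_conj (g : G) (δ : NormalPChain p G Z) :
    Set.range (conjChain hZ g δ).D
      = (Subgroup.map (MulAut.conj g).toMonoidHom) '' Set.range δ.D := by
  exact Set.range_comp (Subgroup.map (MulAut.conj g).toMonoidHom) δ.D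

/-- the pairing is `G`-equivariant. -/
theorem fc_conj (g : G) (δ : NormalPChain p G Z) :
    fc hp hZ hlt (conjChain hZ g δ) = conjChain hZ g (fc hp hZ hlt δ) := by
  apply eq_of_range_eq
  have hinj : Function.Injective (Subgroup.map (MulAut.conj g).toMonoidHom) :=
    fun _ _ hAB => Subgroup.map_injective (MulAut.conj g).injective hAB
  by_cases h : ∃ i, δ.D i = Yd hZ δ
  · have h' := (exists_Y_conj_iff hZ g δ).mpr h
    rw [range_fc_of_mem hp hZ hlt _ h', range_conj hZ g (fc hp hZ hlt δ),
      range_fc_of_mem hp hZ hlt δ h, range_conj hZ g δ, Yd_conj hZ g δ,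
      Set.image_diff hinj, Set.image_singleton]
  · have h' := fun hc => h ((exists_Y_conj_iff hZ g δ).mp hc)
    rw [range_fc_of_not_mem hp hZ hlt _ h', range_conj hZ g (fc hp hZ hlt δ),
      range_fc_of_not_mem hp hZ hlt δ h, range_conj hZ g δ, Yd_conj hZ g δ,
      Set.image_union, Set.image_singleton]

end Equivariance
theorem eqvGen_map {α β : Type} {r : α → α → Prop} {r' : β → β → Prop} (m : α → β)
    (hm : ∀ a b, r a b → r' (m a) (m b)) {a b : α} (h : Relation.EqvGen r a b) :
    Relation.EqvGen r' (m a) (m b) := by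
  induction h with
  | rel x y hxy => exact Relation.EqvGen.rel _ _ (hm x y hxy)
  | refl x => exact Relation.EqvGen.refl _
  | symm x y _ ih => exact Relation.EqvGen.symm _ _ ih
  | trans x y z _ _ ih1 ih2 => exact Relation.EqvGen.trans _ _ _ ih1 ih2
/-- for a central `p`-subgroup `Z < O_p(G)` there is a `G`-equivariant,
stabilizer-preserving, parity-swapping bijection on normal `p`-chains starting at `Z`;
consequently, for every `d ≥ 0` and every `p`-block `B` (abstracted here by any
conjugation-equivariant assignment `F` of character sets to stabilizer subgroups, as
`C^d(B,Z)_ε` depends on `δ` only through its parity and `G_δ`), the sets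
`C^d(B,Z)₊ / G` and `C^d(B,Z)₋ / G` have the same cardinality. -/
theorem chain_pairing_orbit_count {G X : Type} [Group G] [Fintype G] [MulAction G X]
    (p : ℕ) (hp : p.Prime) (Z : Subgroup G)
    (hZ : Z ≤ Subgroup.center G) (hZp : IsPGroup p Z) (hlt : Z < pCore p G)
    (F : Subgroup G → Set X)
    (hF : ∀ (g : G) (H : Subgroup G),
      F (H.map (MulAut.conj g).toMonoidHom) = (g • ·) '' F H) :
    (∃ f : NormalPChain p G Z → NormalPChain p G Z,
      (∀ δ, f (f δ) = δ) ∧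
      (∀ δ, Even (f δ).n ↔ ¬ Even δ.n) ∧
      (∀ δ, stabChain (f δ) = stabChain δ) ∧
      (∀ (g : G) (δ), f (conjChain hZ g δ) = conjChain hZ g (f δ))) ∧
    Nat.card (Quotient (Relation.EqvGen.setoid
        (pairRel p hZ (fun a => Even a.1.n ∧ a.2 ∈ F (stabChain a.1))))) =
      Nat.card (Quotient (Relation.EqvGen.setoid
        (pairRel p hZ (fun a => ¬ Even a.1.n ∧ a.2 ∈ F (stabChain a.1))))) := by
  have h1 : ∀ δ, fc hp hZ hlt (fc hp hZ hlt δ) = δ := fc_fc hp hZ hlt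
  have h2 : ∀ δ : NormalPChain p G Z, Even (fc hp hZ hlt δ).n ↔ ¬ Even δ.n :=
    fc_parity hp hZ hlt
  have h3 : ∀ δ : NormalPChain p G Z, stabChain (fc hp hZ hlt δ) = stabChain δ :=
    fc_stab hp hZ hlt
  have h4 : ∀ (g : G) (δ : NormalPChain p G Z),
      fc hp hZ hlt (conjChain hZ g δ) = conjChain hZ g (fc hp hZ hlt δ) :=
    fc_conj hp hZ hlt
  refine ⟨⟨fc hp hZ hlt, h1, h2, h3, h4⟩, ?_⟩
  set P₁ : NormalPChain p G Z × X → Prop :=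
    fun a => Even a.1.n ∧ a.2 ∈ F (stabChain a.1) with hP₁
  set P₂ : NormalPChain p G Z × X → Prop :=
    fun a => ¬ Even a.1.n ∧ a.2 ∈ F (stabChain a.1) with hP₂
  let m₁ : {a : NormalPChain p G Z × X // P₁ a} → {a : NormalPChain p G Z × X // P₂ a} :=
    fun a => ⟨(fc hp hZ hlt a.1.1, a.1.2),
      ⟨fun hev => ((h2 a.1.1).mp hev) a.2.1, by rw [h3 a.1.1]; exact a.2.2⟩⟩
  let m₂ : {a : NormalPChain p G Z × X // P₂ a} → {a : NormalPChain p G Z × X // P₁ a} :=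
    fun a => ⟨(fc hp hZ hlt a.1.1, a.1.2),
      ⟨(h2 a.1.1).mpr a.2.1, by rw [h3 a.1.1]; exact a.2.2⟩⟩
  have hm₁ : ∀ a b, pairRel p hZ P₁ a b → pairRel p hZ P₂ (m₁ a) (m₁ b) := by
    rintro a b ⟨g, hgδ, hgx⟩
    refine ⟨g, ?_, hgx⟩
    show conjChain hZ g (fc hp hZ hlt a.1.1) = fc hp hZ hlt b.1.1
    rw [← h4 g a.1.1, hgδ]
  have hm₂ : ∀ a b, pairRel p hZ P₂ a b → pairRel p hZ P₁ (m₂ a) (m₂ b) := by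
    rintro a b ⟨g, hgδ, hgx⟩
    refine ⟨g, ?_, hgx⟩
    show conjChain hZ g (fc hp hZ hlt a.1.1) = fc hp hZ hlt b.1.1
    rw [← h4 g a.1.1, hgδ]
  have hm₂₁ : ∀ a, m₂ (m₁ a) = a := by
    intro a
    apply Subtype.ext
    show (fc hp hZ hlt (fc hp hZ hlt a.1.1), a.1.2) = a.1
    rw [h1 a.1.1]
  have hm₁₂ : ∀ a, m₁ (m₂ a) = a := by
    intro a
    apply Subtype.ext
    show (fc hp hZ hlt (fc hp hZ hlt a.1.1), a.1.2) = a.1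
    rw [h1 a.1.1]
  apply Nat.card_congr
  exact {
    toFun := Quotient.map m₁ (fun a b hab => eqvGen_map m₁ hm₁ hab)
    invFun := Quotient.map m₂ (fun a b hab => eqvGen_map m₂ hm₂ hab)
    left_inv := by
      intro q
      induction q using Quotient.inductionOn with
      | h a =>
        rw [Quotient.map_mk, Quotient.map_mk, hm₂₁ a]
    right_inv := by
      intro q
      induction q using Quotient.inductionOn with
      | h a =>
        rw [Quotient.map_mk, Quotient.map_mk, hm₁₂ a] }

end CTC
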